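/- Let X_1,…,X_n, Y_1,…,Y_m, Z be short spaces over K with seminorms indexed by a partially ordered commutative monoid 𝕃. Let ξ : X_1 × ⋯ × X_n × Y_1 × ⋯ × Y_m → Z be a K-multilinear map, and let ψ be the corresponding multilinear map sending (y_1,…,y_m) to the multilinear map (x_1,…,x_n) ↦ ξ(x_1,…,x_n,y_1,…,y_m). Then ξ is short (i.e. ‖ξ(x,y)‖_{Σλ_i+Σμ_j} ≤ ∏‖x_i‖_{λ_i}·∏‖y_j‖_{μ_j} for all arguments and all indices) if and only if for all y_1,…,y_m and μ_1,…,μ_m one has ‖ψ(y_1,…,y_m)‖_{μ_1+⋯+μ_m} ≤ ‖y_1‖_{μ_1}⋯‖y_m‖_{μ_m}, where ‖g‖_l = inf{ c > 0 | ‖g(x_1,…,x_n)‖_{λ_1+⋯+λ_n+l} ≤ c·∏_k ‖x_k‖_{λ_k} for all x_k and λ_k } is the operator seminorm on multilinear maps X_1 × ⋯ × X_n → Z. -/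

import Mathlib

open scoped ENNReal

/-- Product of two extended nonnegative reals with the convention `0 ⬝ ∞ = ∞ ⬝ 0 = ∞`. -/
noncomputable def emul (a b : ℝ≥0∞) : ℝ≥0∞ := by
  classical exact if (a = 0 ∧ b = ⊤) ∨ (a = ⊤ ∧ b = 0) then ⊤ else a * b

/-- Product of a finite family of extended nonnegative reals with the convention `0 ⬝ ∞ = ∞`. -/
noncomputable def eprod {n : ℕ} (v : Fin n → ℝ≥0∞) : ℝ≥0∞ :=
  (List.ofFn v).foldr emul 1

/-- The operator seminorm with index `l ∈ 𝕃` on multilinear maps between short spaces. -/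
noncomputable def opSeminorm {𝕜 : Type*} [RCLike 𝕜] {𝕃 : Type*} [AddCommMonoid 𝕃]
    [PartialOrder 𝕃] {n : ℕ} {X : Fin n → Type*} [∀ k, AddCommGroup (X k)]
    [∀ k, Module 𝕜 (X k)] {Z : Type*} [AddCommGroup Z] [Module 𝕜 Z]
    (pX : ∀ k, 𝕃 → X k → ℝ≥0∞) (pZ : 𝕃 → Z → ℝ≥0∞)
    (f : MultilinearMap 𝕜 X Z) (l : 𝕃) : ℝ≥0∞ :=
  sInf {e : ℝ≥0∞ | ∃ c : ℝ, 0 < c ∧ e = ENNReal.ofReal c ∧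
    ∀ (x : ∀ k, X k) (lam : Fin n → 𝕃),
      pZ ((∑ k, lam k) + l) (f x) ≤ ENNReal.ofReal c * eprod (fun k => pX k (lam k) (x k))}

lemma emul_top_right (a : ℝ≥0∞) : emul a ⊤ = ⊤ := by
  unfold emul
  split_ifs with h
  · rfl
  · have ha : a ≠ 0 := fun h0 => h (Or.inl ⟨h0, rfl⟩)
    exact ENNReal.mul_top ha

lemma emul_top_left (b : ℝ≥0∞) : emul ⊤ b = ⊤ := by
  unfold emul
  split_ifs with h
  · rfl
  · have hb : b ≠ 0 := fun h0 => h (Or.inr ⟨rfl, h0⟩)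
    exact ENNReal.top_mul hb

lemma emul_of_ne_top {a b : ℝ≥0∞} (ha : a ≠ ⊤) (hb : b ≠ ⊤) : emul a b = a * b := by
  unfold emul
  rw [if_neg]
  rintro (⟨_, h⟩ | ⟨h, _⟩)
  · exact hb h
  · exact ha h

/-- (Closedness of the multicategory of short spaces.)  Let
`ξ : X 1 × ⋯ × X n × Y 1 × ⋯ × Y m → Z` be a multilinear map between short spaces, given in
curried form `ψ : (y 1, …, y m) ↦ ((x 1, …, x n) ↦ ξ(x, y))`.  Then `ξ` is short if and only if
`ψ` satisfies `‖ψ y‖_{μ₁+⋯+μₘ} ≤ ‖y₁‖_{μ₁} ⋯ ‖yₘ‖_{μₘ}` for all `y` and `μ`, where `‖·‖_l` is the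
operator seminorm on multilinear maps `X 1 × ⋯ × X n → Z`. -/
theorem short_iff_curried_short {𝕜 : Type*} [RCLike 𝕜] {𝕃 : Type*} [AddCommMonoid 𝕃]
    [PartialOrder 𝕃] {n m : ℕ}
    {X : Fin n → Type*} [∀ k, AddCommGroup (X k)] [∀ k, Module 𝕜 (X k)]
    {Y : Fin m → Type*} [∀ j, AddCommGroup (Y j)] [∀ j, Module 𝕜 (Y j)]
    {Z : Type*} [AddCommGroup Z] [Module 𝕜 Z]
    (pX : ∀ k, 𝕃 → X k → ℝ≥0∞)
    (hpX_smul : ∀ k l (c : 𝕜) (x : X k), pX k l (c • x) = (‖c‖₊ : ℝ≥0∞) * pX k l x)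
    (hpX_add : ∀ k l (x y : X k), pX k l (x + y) ≤ pX k l x + pX k l y)
    (hpX_mono : ∀ k (x : X k) (a b : 𝕃), a ≤ b → pX k a x ≤ pX k b x)
    (hpX_fin : ∀ k (x : X k), ∃ l, pX k l x < ⊤)
    (pY : ∀ j, 𝕃 → Y j → ℝ≥0∞)
    (hpY_smul : ∀ j l (c : 𝕜) (y : Y j), pY j l (c • y) = (‖c‖₊ : ℝ≥0∞) * pY j l y)
    (hpY_add : ∀ j l (y y' : Y j), pY j l (y + y') ≤ pY j l y + pY j l y')
    (hpY_mono : ∀ j (y : Y j) (a b : 𝕃), a ≤ b → pY j a y ≤ pY j b y)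
    (hpY_fin : ∀ j (y : Y j), ∃ l, pY j l y < ⊤)
    (pZ : 𝕃 → Z → ℝ≥0∞)
    (hpZ_smul : ∀ l (c : 𝕜) (z : Z), pZ l (c • z) = (‖c‖₊ : ℝ≥0∞) * pZ l z)
    (hpZ_add : ∀ l (z w : Z), pZ l (z + w) ≤ pZ l z + pZ l w)
    (hpZ_mono : ∀ (z : Z) (a b : 𝕃), a ≤ b → pZ a z ≤ pZ b z)
    (hpZ_fin : ∀ z : Z, ∃ l, pZ l z < ⊤)
    (ψ : MultilinearMap 𝕜 Y (MultilinearMap 𝕜 X Z)) :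
    (∀ (x : ∀ k, X k) (y : ∀ j, Y j) (lam : Fin n → 𝕃) (mu : Fin m → 𝕃),
        pZ ((∑ k, lam k) + ∑ j, mu j) (ψ y x) ≤
          emul (eprod (fun k => pX k (lam k) (x k))) (eprod (fun j => pY j (mu j) (y j)))) ↔
      (∀ (y : ∀ j, Y j) (mu : Fin m → 𝕃),
        opSeminorm pX pZ (ψ y) (∑ j, mu j) ≤ eprod (fun j => pY j (mu j) (y j))) := by
  constructor
  · intro h y mu
    set B := eprod (fun j => pY j (mu j) (y j)) with hB
    rcases eq_or_ne B ⊤ with hBtop | hBtop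
    · rw [hBtop]; exact le_top
    apply ENNReal.le_of_forall_pos_le_add
    intro ε hε _
    have hc : (0:ℝ) < B.toReal + ε := by positivity
    have hce : ENNReal.ofReal (B.toReal + ε) = B + ε := by
      rw [ENNReal.ofReal_add ENNReal.toReal_nonneg ε.coe_nonneg,
        ENNReal.ofReal_toReal hBtop, ENNReal.ofReal_coe_nnreal]
    have hmem : ENNReal.ofReal (B.toReal + ε) ∈
        {e : ℝ≥0∞ | ∃ c : ℝ, 0 < c ∧ e = ENNReal.ofReal c ∧
          ∀ (x : ∀ k, X k) (lam : Fin n → 𝕃),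
            pZ ((∑ k, lam k) + ∑ j, mu j) (ψ y x) ≤
              ENNReal.ofReal c * eprod (fun k => pX k (lam k) (x k))} := by
      refine ⟨B.toReal + ε, hc, rfl, ?_⟩
      intro x lam
      have hξ := h x y lam mu
      set A := eprod (fun k => pX k (lam k) (x k)) with hA
      rcases eq_or_ne A ⊤ with hAtop | hAtop
      · rw [hAtop, ENNReal.mul_top (by simpa [ENNReal.ofReal_eq_zero] using hc)]
        exact le_top
      · calc pZ ((∑ k, lam k) + ∑ j, mu j) (ψ y x) ≤ emul A B := hξ
          _ = A * B := emul_of_ne_top hAtop hBtop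
          _ ≤ A * ENNReal.ofReal (B.toReal + ε) := by
              gcongr
              rw [hce]; exact le_self_add
          _ = ENNReal.ofReal (B.toReal + ε) * A := mul_comm _ _
    have := sInf_le hmem
    rw [hce] at this
    exact this
  · intro h x y lam mu
    set A := eprod (fun k => pX k (lam k) (x k)) with hA
    set B := eprod (fun j => pY j (mu j) (y j)) with hB
    rcases eq_or_ne B ⊤ with hBtop | hBtop
    · rw [hBtop, emul_top_right]; exact le_top
    rcases eq_or_ne A ⊤ with hAtop | hAtop
    · rw [hAtop, emul_top_left]; exact le_top
    rw [emul_of_ne_top hAtop hBtop]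
    have hop := h y mu
    rw [opSeminorm] at hop
    have key : ∀ e ∈ {e : ℝ≥0∞ | ∃ c : ℝ, 0 < c ∧ e = ENNReal.ofReal c ∧
          ∀ (x : ∀ k, X k) (lam : Fin n → 𝕃),
            pZ ((∑ k, lam k) + ∑ j, mu j) (ψ y x) ≤
              ENNReal.ofReal c * eprod (fun k => pX k (lam k) (x k))},
        pZ ((∑ k, lam k) + ∑ j, mu j) (ψ y x) ≤ e * A := by
      rintro e ⟨c, hc, rfl, hineq⟩
      exact hineq x lam
    apply ENNReal.le_of_forall_pos_le_add
    intro ε hε _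
    rcases eq_or_ne A 0 with hA0 | hA0
    · have hlt : sInf {e : ℝ≥0∞ | ∃ c : ℝ, 0 < c ∧ e = ENNReal.ofReal c ∧
          ∀ (x : ∀ k, X k) (lam : Fin n → 𝕃),
            pZ ((∑ k, lam k) + ∑ j, mu j) (ψ y x) ≤
              ENNReal.ofReal c * eprod (fun k => pX k (lam k) (x k))} < ⊤ :=
        lt_of_le_of_lt hop hBtop.lt_top
      obtain ⟨e, heS, -⟩ := sInf_lt_iff.mp hlt
      have := key e heS
      rw [hA0, mul_zero] at this
      exact le_trans this (zero_le)
    · have hδ : (0:ℝ≥0∞) < (ε : ℝ≥0∞) / A :=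
        ENNReal.div_pos (by exact_mod_cast hε.ne') hAtop
      have hlt : sInf {e : ℝ≥0∞ | ∃ c : ℝ, 0 < c ∧ e = ENNReal.ofReal c ∧
          ∀ (x : ∀ k, X k) (lam : Fin n → 𝕃),
            pZ ((∑ k, lam k) + ∑ j, mu j) (ψ y x) ≤
              ENNReal.ofReal c * eprod (fun k => pX k (lam k) (x k))} < B + (ε : ℝ≥0∞) / A :=
        lt_of_le_of_lt hop (ENNReal.lt_add_right hBtop hδ.ne')
      obtain ⟨e, heS, he⟩ := sInf_lt_iff.mp hlt
      calc pZ ((∑ k, lam k) + ∑ j, mu j) (ψ y x) ≤ e * A := key e heS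
        _ ≤ (B + (ε : ℝ≥0∞) / A) * A := mul_le_mul_left he.le A
        _ = B * A + ((ε : ℝ≥0∞) / A) * A := add_mul _ _ _
        _ = A * B + ε := by rw [ENNReal.div_mul_cancel hA0 hAtop, mul_comm B A]
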